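/- Let N be a finite set with at least two elements, let σ > 0, let (μ_n)_{n∈N} be pairwise distinct real numbers, let (p_n)_{n∈N} be strictly positive weights, and let (γ_{n,n'})_{n,n'∈N} be nonnegative loss parameters. Define the Gaussian density φ_{μ,σ}(s) = (2πσ²)^{-1/2} exp(−(s−μ)²/(2σ²)), the MAP decision region R_{n'} = { s ∈ ℝ : p_{n'}·φ_{μ_{n'},σ}(s) ≥ p_m·φ_{μ_m,σ}(s) for all m ∈ N }, the standard normal tail Q(x) = ∫_x^∞ (2π)^{-1/2} e^{−t²/2} dt, and d_{n,n'} = ((μ_{n'}−μ_n)² − 2σ² ln(p_{n'}/p_n)) / (2σ·|μ_{n'}−μ_n|) for n ≠ n'. Then Σ_{n∈N} p_n Σ_{n'∈N, n'≠n} γ_{n,n'} · ν_n(R_{n'}) ≤ Σ_{n∈N} p_n Σ_{n'∈N, n'≠n} γ_{n,n'} · Q(d_{n,n'}), where ν_n denotes the Gaussian measure N(μ_n, σ²) on ℝ. -/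

import Mathlib

open MeasureTheory ProbabilityTheory

/-- The Gaussian density with mean `μ` and standard deviation `σ`. -/
noncomputable def gaussianDensity (μ σ s : ℝ) : ℝ :=
  (Real.sqrt (2 * Real.pi * σ ^ 2))⁻¹ * Real.exp (-(s - μ) ^ 2 / (2 * σ ^ 2))

/-- The standard normal tail function `Q(x) = ∫_x^∞ (2π)^{-1/2} e^{−t²/2} dt`. -/
noncomputable def stdNormalTail (x : ℝ) : ℝ :=
  ∫ t in Set.Ioi x, (Real.sqrt (2 * Real.pi))⁻¹ * Real.exp (-t ^ 2 / 2)

lemma stdNormalTail_eq (c : ℝ) :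
    ((gaussianReal 0 1) (Set.Ici c)).toReal = stdNormalTail c := by
  rw [gaussianReal_apply_eq_integral 0 one_ne_zero,
    ENNReal.toReal_ofReal (integral_nonneg fun x => gaussianPDFReal_nonneg _ _ _)]
  rw [MeasureTheory.integral_Ici_eq_integral_Ioi, stdNormalTail]
  congr 1
  ext x
  simp [gaussianPDFReal, mul_one]

lemma gauss_map (μ σ : ℝ) :
    gaussianReal μ ⟨σ ^ 2, sq_nonneg σ⟩ = ((gaussianReal 0 1).map (σ * ·)).map (· + μ) := by
  rw [gaussianReal_map_const_mul, gaussianReal_map_add_const]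
  norm_num
  rfl

lemma gauss_neg (c : ℝ) : gaussianReal 0 1 (Set.Iic c) = gaussianReal 0 1 (Set.Ici (-c)) := by
  have h : gaussianReal 0 1 = (gaussianReal 0 1).map ((-1 : ℝ) * ·) := by
    rw [gaussianReal_map_const_mul]
    norm_num
  conv_lhs => rw [h]
  rw [Measure.map_apply (measurable_const_mul _) measurableSet_Iic]
  congr 1
  ext x
  simp

lemma gauss_Ici (μ σ : ℝ) (hσ : 0 < σ) (a : ℝ) :
    ((gaussianReal μ ⟨σ ^ 2, sq_nonneg σ⟩) (Set.Ici a)).toReal = stdNormalTail ((a - μ) / σ) := by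
  rw [gauss_map, Measure.map_apply (measurable_add_const μ) measurableSet_Ici,
    Set.preimage_add_const_Ici,
    Measure.map_apply (measurable_const_mul σ) measurableSet_Ici,
    Set.preimage_const_mul_Ici₀ _ hσ, stdNormalTail_eq]

lemma gauss_Iic (μ σ : ℝ) (hσ : 0 < σ) (a : ℝ) :
    ((gaussianReal μ ⟨σ ^ 2, sq_nonneg σ⟩) (Set.Iic a)).toReal = stdNormalTail ((μ - a) / σ) := by
  rw [gauss_map, Measure.map_apply (measurable_add_const μ) measurableSet_Iic,
    Set.preimage_add_const_Iic,
    Measure.map_apply (measurable_const_mul σ) measurableSet_Iic,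
    Set.preimage_const_mul_Iic₀ _ hσ, gauss_neg, stdNormalTail_eq]
  rw [neg_div', neg_sub]

lemma density_ineq_iff (σ : ℝ) (hσ : 0 < σ) (m1 m2 q1 q2 s : ℝ)
    (hq1 : 0 < q1) (hq2 : 0 < q2) :
    q1 * gaussianDensity m1 σ s ≤ q2 * gaussianDensity m2 σ s ↔
      m2 ^ 2 - m1 ^ 2 - 2 * σ ^ 2 * Real.log (q2 / q1) ≤ 2 * (m2 - m1) * s := by
  have hc : 0 < (Real.sqrt (2 * Real.pi * σ ^ 2))⁻¹ := by
    have := Real.pi_pos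
    positivity
  unfold gaussianDensity
  rw [show q1 * ((Real.sqrt (2 * Real.pi * σ ^ 2))⁻¹ * Real.exp (-(s - m1) ^ 2 / (2 * σ ^ 2)))
      = (Real.sqrt (2 * Real.pi * σ ^ 2))⁻¹ * (q1 * Real.exp (-(s - m1) ^ 2 / (2 * σ ^ 2)))
      from by ring,
    show q2 * ((Real.sqrt (2 * Real.pi * σ ^ 2))⁻¹ * Real.exp (-(s - m2) ^ 2 / (2 * σ ^ 2)))
      = (Real.sqrt (2 * Real.pi * σ ^ 2))⁻¹ * (q2 * Real.exp (-(s - m2) ^ 2 / (2 * σ ^ 2)))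
      from by ring,
    mul_le_mul_iff_right₀ hc]
  nth_rewrite 1 [← Real.exp_log hq1]
  nth_rewrite 1 [← Real.exp_log hq2]
  rw [← Real.exp_add, ← Real.exp_add, Real.exp_le_exp, Real.log_div hq2.ne' hq1.ne']
  have h2 : (0:ℝ) < 2 * σ ^ 2 := by positivity
  have hrw : ∀ x y : ℝ, x + y / (2 * σ ^ 2) = (x * (2 * σ ^ 2) + y) / (2 * σ ^ 2) := by
    intro x y; field_simp
  rw [hrw, hrw, div_le_div_iff_of_pos_right h2]
  constructor <;> intro h <;> nlinarith [h]

lemma mem_Ici_of {Δ W mn s : ℝ} (h : 0 < Δ)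
    (hss : (mn + Δ) ^ 2 - mn ^ 2 - W ≤ 2 * Δ * s) :
    mn + (Δ ^ 2 - W) / (2 * Δ) ≤ s := by
  have h2 : (Δ ^ 2 - W) / (2 * Δ) ≤ s - mn := by
    rw [div_le_iff₀ (by linarith : (0:ℝ) < 2 * Δ)]
    nlinarith
  linarith

lemma mem_Iic_of {Δ W mn s : ℝ} (h : Δ < 0)
    (hss : (mn + Δ) ^ 2 - mn ^ 2 - W ≤ 2 * Δ * s) :
    s ≤ mn + (Δ ^ 2 - W) / (2 * Δ) := by
  have h2 : s - mn ≤ (Δ ^ 2 - W) / (2 * Δ) := by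
    rw [le_div_iff_of_neg (by linarith : 2 * Δ < 0)]
    nlinarith
  linarith

/-- Union-bound inequality behind Proposition 2: the exact misclassification loss of
the MAP decision rule under Gaussian observations is upper-bounded by the approximate
localization loss `l_a`, a weighted sum of standard normal tail values `Q(d_{n,n'})`. -/
theorem union_bound_approximate_loss
    {N : Type*} [Fintype N] [DecidableEq N] (hN : 2 ≤ Fintype.card N)
    (σ : ℝ) (hσ : 0 < σ)
    (μ : N → ℝ) (hμ : Function.Injective μ)
    (p : N → ℝ) (hp : ∀ n, 0 < p n)
    (γ : N → N → ℝ) (hγ : ∀ n n', 0 ≤ γ n n')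
    (R : N → Set ℝ)
    (hR : ∀ n', R n' = {s : ℝ | ∀ m : N,
      p m * gaussianDensity (μ m) σ s ≤ p n' * gaussianDensity (μ n') σ s})
    (d : N → N → ℝ)
    (hd : ∀ n n', n ≠ n' →
      d n n' = ((μ n' - μ n) ^ 2 - 2 * σ ^ 2 * Real.log (p n' / p n)) /
        (2 * σ * |μ n' - μ n|)) :
    ∑ n : N, p n * ∑ n' ∈ Finset.univ \ {n}, γ n n' *
        ((gaussianReal (μ n) ⟨σ ^ 2, sq_nonneg σ⟩) (R n')).toReal ≤
      ∑ n : N, p n * ∑ n' ∈ Finset.univ \ {n}, γ n n' * stdNormalTail (d n n') := by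
  apply Finset.sum_le_sum
  intro n _
  apply mul_le_mul_of_nonneg_left _ (hp n).le
  apply Finset.sum_le_sum
  intro n' hn'
  have hne : n' ≠ n := by
    simpa using (Finset.mem_sdiff.mp hn').2
  apply mul_le_mul_of_nonneg_left _ (hγ n n')
  have hΔ : μ n' - μ n ≠ 0 := sub_ne_zero.mpr fun h => hne (hμ h)
  have hsub : ∀ s ∈ R n',
      (μ n + (μ n' - μ n)) ^ 2 - (μ n) ^ 2 - 2 * σ ^ 2 * Real.log (p n' / p n)
        ≤ 2 * (μ n' - μ n) * s := by
    intro s hs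
    rw [hR n'] at hs
    have := (density_ineq_iff σ hσ (μ n) (μ n') (p n) (p n') s (hp n) (hp n')).mp (hs n)
    rw [show μ n + (μ n' - μ n) = μ n' from by ring]
    linarith
  have hdval := hd n n' hne.symm
  rcases hΔ.lt_or_gt with h | h
  · -- μ n' - μ n < 0 : R n' ⊆ Iic a
    have hRsub : R n' ⊆ Set.Iic (μ n +
        ((μ n' - μ n) ^ 2 - 2 * σ ^ 2 * Real.log (p n' / p n)) / (2 * (μ n' - μ n))) :=
      fun s hs => mem_Iic_of h (hsub s hs)
    calc ((gaussianReal (μ n) ⟨σ ^ 2, sq_nonneg σ⟩) (R n')).toReal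
        ≤ ((gaussianReal (μ n) ⟨σ ^ 2, sq_nonneg σ⟩) (Set.Iic (μ n +
            ((μ n' - μ n) ^ 2 - 2 * σ ^ 2 * Real.log (p n' / p n)) /
              (2 * (μ n' - μ n))))).toReal :=
          ENNReal.toReal_mono (by have := instIsProbabilityMeasureGaussianReal (μ n) ⟨σ ^ 2, sq_nonneg σ⟩; exact measure_ne_top _ _) (measure_mono hRsub)
      _ = stdNormalTail ((μ n - (μ n +
            ((μ n' - μ n) ^ 2 - 2 * σ ^ 2 * Real.log (p n' / p n)) /
              (2 * (μ n' - μ n)))) / σ) := gauss_Iic _ _ hσ _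
      _ = stdNormalTail (d n n') := by
          congr 1
          rw [hdval, abs_of_neg h]
          have h1 : μ n - μ n' ≠ 0 := by intro hc; apply hΔ; linarith [sub_eq_zero.mp hc]
          have h2 : μ n' - μ n ≠ 0 := hΔ
          field_simp [h1, h2, hσ.ne']
          ring
  · -- 0 < μ n' - μ n : R n' ⊆ Ici a
    have hRsub : R n' ⊆ Set.Ici (μ n +
        ((μ n' - μ n) ^ 2 - 2 * σ ^ 2 * Real.log (p n' / p n)) / (2 * (μ n' - μ n))) :=
      fun s hs => mem_Ici_of h (hsub s hs)
    calc ((gaussianReal (μ n) ⟨σ ^ 2, sq_nonneg σ⟩) (R n')).toReal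
        ≤ ((gaussianReal (μ n) ⟨σ ^ 2, sq_nonneg σ⟩) (Set.Ici (μ n +
            ((μ n' - μ n) ^ 2 - 2 * σ ^ 2 * Real.log (p n' / p n)) /
              (2 * (μ n' - μ n))))).toReal :=
          ENNReal.toReal_mono (by have := instIsProbabilityMeasureGaussianReal (μ n) ⟨σ ^ 2, sq_nonneg σ⟩; exact measure_ne_top _ _) (measure_mono hRsub)
      _ = stdNormalTail ((μ n +
            ((μ n' - μ n) ^ 2 - 2 * σ ^ 2 * Real.log (p n' / p n)) /
              (2 * (μ n' - μ n)) - μ n) / σ) := gauss_Ici _ _ hσ _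
      _ = stdNormalTail (d n n') := by
          congr 1
          rw [hdval, abs_of_pos h]
          have h2 : μ n' - μ n ≠ 0 := hΔ
          field_simp [h2, hσ.ne']
          ring
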